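/- Let D be a division ring, A : Matrix m n D with m, n finite, and k < |m|. Suppose there are injections S : Fin k ↪ m and T : Fin k ↪ n such that the k×k submatrix A.submatrix S T is invertible, while every (k+1)×(k+1) square submatrix of A is not invertible. Then the rows of A are left linearly dependent: there exists λ : m → D with λ ≠ 0 and vecMul λ A = 0 (i.e. ∑ i, λ i * A i j = 0 for every j). -/

import Mathlib

open Matrix

private lemma vecMul_apply' {R : Type*} [NonUnitalNonAssocSemiring R] {a b : Type*} [Fintype a]
    (v : a → R) (M : Matrix a b R) (j : b) : Matrix.vecMul v M j = ∑ i, v i * M i j := rfl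

section
variable {R : Type*} [Ring R] {p q : Type*} [Fintype p] [Fintype q] [DecidableEq p] [DecidableEq q]

lemma aux_isUnit_fromBlocks (B : Matrix p p R) (u : Matrix p q R) (v : Matrix q p R)
    (x : Matrix q q R) [Invertible B] [Invertible (x - v * ⅟B * u)] :
    IsUnit (fromBlocks B u v x) := by
  set t := x - v * ⅟B * u with ht
  have hL : IsUnit (fromBlocks (1 : Matrix p p R) (0 : Matrix p q R) (v * ⅟B) 1) := by
    have h1 : fromBlocks (1 : Matrix p p R) (0 : Matrix p q R) (v * ⅟B) 1 *
        fromBlocks (1 : Matrix p p R) (0 : Matrix p q R) (-(v * ⅟B)) 1 = 1 := by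
      rw [fromBlocks_multiply, ← fromBlocks_one]
      congr 1 <;> simp only [Matrix.one_mul, Matrix.mul_one, Matrix.mul_zero, Matrix.zero_mul,
        add_zero, zero_add, neg_add_cancel, add_neg_cancel]
    have h2 : fromBlocks (1 : Matrix p p R) (0 : Matrix p q R) (-(v * ⅟B)) 1 *
        fromBlocks (1 : Matrix p p R) (0 : Matrix p q R) (v * ⅟B) 1 = 1 := by
      rw [fromBlocks_multiply, ← fromBlocks_one]
      congr 1 <;> simp only [Matrix.one_mul, Matrix.mul_one, Matrix.mul_zero, Matrix.zero_mul,
        add_zero, zero_add, neg_add_cancel, add_neg_cancel]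
    exact ⟨⟨_, _, h1, h2⟩, rfl⟩
  have hU : IsUnit (fromBlocks (1 : Matrix p p R) (⅟B * u) (0 : Matrix q p R) 1) := by
    have h1 : fromBlocks (1 : Matrix p p R) (⅟B * u) (0 : Matrix q p R) 1 *
        fromBlocks (1 : Matrix p p R) (-(⅟B * u)) (0 : Matrix q p R) 1 = 1 := by
      rw [fromBlocks_multiply, ← fromBlocks_one]
      congr 1 <;> simp only [Matrix.one_mul, Matrix.mul_one, Matrix.mul_zero, Matrix.zero_mul,
        add_zero, zero_add, neg_add_cancel, add_neg_cancel]
    have h2 : fromBlocks (1 : Matrix p p R) (-(⅟B * u)) (0 : Matrix q p R) 1 *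
        fromBlocks (1 : Matrix p p R) (⅟B * u) (0 : Matrix q p R) 1 = 1 := by
      rw [fromBlocks_multiply, ← fromBlocks_one]
      congr 1 <;> simp only [Matrix.one_mul, Matrix.mul_one, Matrix.mul_zero, Matrix.zero_mul,
        add_zero, zero_add, neg_add_cancel, add_neg_cancel]
    exact ⟨⟨_, _, h1, h2⟩, rfl⟩
  have hM : IsUnit (fromBlocks B (0 : Matrix p q R) (0 : Matrix q p R) t) := by
    have h1 : fromBlocks B (0 : Matrix p q R) (0 : Matrix q p R) t *
        fromBlocks (⅟B) (0 : Matrix p q R) (0 : Matrix q p R) (⅟t) = 1 := by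
      rw [fromBlocks_multiply, ← fromBlocks_one]
      congr 1 <;> simp only [Matrix.mul_zero, Matrix.zero_mul, add_zero, zero_add,
        mul_invOf_self, invOf_mul_self]
    have h2 : fromBlocks (⅟B) (0 : Matrix p q R) (0 : Matrix q p R) (⅟t) *
        fromBlocks B (0 : Matrix p q R) (0 : Matrix q p R) t = 1 := by
      rw [fromBlocks_multiply, ← fromBlocks_one]
      congr 1 <;> simp only [Matrix.mul_zero, Matrix.zero_mul, add_zero, zero_add,
        mul_invOf_self, invOf_mul_self]
    exact ⟨⟨_, _, h1, h2⟩, rfl⟩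
  have hfact : fromBlocks B u v x =
      fromBlocks (1 : Matrix p p R) (0 : Matrix p q R) (v * ⅟B) 1 *
        fromBlocks B (0 : Matrix p q R) (0 : Matrix q p R) t *
        fromBlocks (1 : Matrix p p R) (⅟B * u) (0 : Matrix q p R) 1 := by
    rw [fromBlocks_multiply, fromBlocks_multiply, fromBlocks_inj]
    refine ⟨?_, ?_, ?_, ?_⟩ <;>
      simp only [Matrix.one_mul, Matrix.mul_one, Matrix.mul_zero, Matrix.zero_mul,
        add_zero, zero_add, Matrix.invOf_mul_cancel_right, Matrix.mul_invOf_cancel_left, ht]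
    rw [← Matrix.mul_assoc]; abel
  rw [hfact]
  exact (hL.mul hM).mul hU
end

theorem stmt_2 {D : Type*} [DivisionRing D] {m n : Type*} [Fintype m] [Fintype n]
    (A : Matrix m n D) (k : ℕ) (hkm : k < Fintype.card m)
    (S : Fin k ↪ m) (T : Fin k ↪ n)
    (hminor : IsUnit (A.submatrix ⇑S ⇑T))
    (hmax : ∀ (S' : Fin (k + 1) ↪ m) (T' : Fin (k + 1) ↪ n),
      ¬ IsUnit (A.submatrix ⇑S' ⇑T')) :
    ∃ l : m → D, l ≠ 0 ∧ Matrix.vecMul l A = 0 := by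
  classical
  obtain ⟨i₀, hi₀⟩ : ∃ i₀ : m, ∀ p, S p ≠ i₀ := by
    by_contra h
    push_neg at h
    have hsurj : Function.Surjective S := fun i => h i
    have := Fintype.card_le_of_surjective _ hsurj
    simp only [Fintype.card_fin] at this
    omega
  set B : Matrix (Fin k) (Fin k) D := A.submatrix ⇑S ⇑T with hB
  obtain ⟨iB⟩ := hminor.nonempty_invertible
  letI := iB
  set c : Fin k → D := Matrix.vecMul (fun p => A i₀ (T p)) (⅟B) with hc
  have hcol : ∀ j, ∑ p, c p * A (S p) j = A i₀ j := by
    intro j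
    by_cases hj : ∃ q, T q = j
    · obtain ⟨q, rfl⟩ := hj
      have h1 : Matrix.vecMul c B = fun p => A i₀ (T p) := by
        rw [hc, Matrix.vecMul_vecMul, invOf_mul_self, Matrix.vecMul_one]
      have h2 := congrFun h1 q
      rw [vecMul_apply'] at h2
      simp only [hB, Matrix.submatrix_apply] at h2
      exact h2
    · by_contra hne
      set u : Matrix (Fin k) (Fin 1) D := fun p _ => A (S p) j with hu
      set v : Matrix (Fin 1) (Fin k) D := fun _ p => A i₀ (T p) with hv
      set x : Matrix (Fin 1) (Fin 1) D := fun _ _ => A i₀ j with hx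
      have hvB : ∀ p, (v * ⅟B) 0 p = c p := by
        intro p
        rw [Matrix.mul_apply, hc, vecMul_apply']
      have hs : (x - v * ⅟B * u) 0 0 = A i₀ j - ∑ p, c p * A (S p) j := by
        rw [Matrix.sub_apply, Matrix.mul_apply]
        exact congrArg₂ (· - ·) rfl (Finset.sum_congr rfl fun p _ => by rw [hvB p])
      have hs0 : (x - v * ⅟B * u) 0 0 ≠ 0 := by
        rw [hs]
        intro h
        exact hne (sub_eq_zero.mp h).symm
      letI : Invertible (x - v * ⅟B * u) := by
        refine ⟨(Matrix.of fun _ _ => ((x - v * ⅟B * u) 0 0)⁻¹ : Matrix (Fin 1) (Fin 1) D), ?_, ?_⟩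
        · ext a b
          rw [Subsingleton.elim a 0, Subsingleton.elim b 0, Matrix.mul_apply,
            Fin.sum_univ_one, Matrix.one_apply_eq, Matrix.of_apply]
          exact inv_mul_cancel₀ hs0
        · ext a b
          rw [Subsingleton.elim a 0, Subsingleton.elim b 0, Matrix.mul_apply,
            Fin.sum_univ_one, Matrix.one_apply_eq, Matrix.of_apply]
          exact mul_inv_cancel₀ hs0
      have hFB : IsUnit (fromBlocks B u v x) := aux_isUnit_fromBlocks B u v x
      set e : Fin (k + 1) ≃ Fin k ⊕ Fin 1 := finSumFinEquiv.symm with he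
      have hSinj : Function.Injective
          (fun i : Fin (k+1) => Sum.elim (⇑S) (fun _ => i₀) (e i)) := by
        intro a b hab
        have hee : e a = e b := by
          rcases h1 : e a with p | p <;> rcases h2 : e b with q | q <;>
            simp only [h1, h2, Sum.elim_inl, Sum.elim_inr] at hab
          · rw [S.injective hab]
          · exact absurd hab (hi₀ p)
          · exact absurd hab.symm (hi₀ q)
          · rw [Subsingleton.elim p q]
        exact e.injective hee
      have hTinj : Function.Injective
          (fun i : Fin (k+1) => Sum.elim (⇑T) (fun _ => j) (e i)) := by
        intro a b hab
        have hee : e a = e b := by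
          rcases h1 : e a with p | p <;> rcases h2 : e b with q | q <;>
            simp only [h1, h2, Sum.elim_inl, Sum.elim_inr] at hab
          · rw [T.injective hab]
          · exact absurd ⟨p, hab⟩ hj
          · exact absurd ⟨q, hab.symm⟩ hj
          · rw [Subsingleton.elim p q]
        exact e.injective hee
      have hsub : A.submatrix (fun i : Fin (k+1) => Sum.elim (⇑S) (fun _ => i₀) (e i))
          (fun i : Fin (k+1) => Sum.elim (⇑T) (fun _ => j) (e i))
          = (fromBlocks B u v x).submatrix ⇑e ⇑e := by
        ext a b
        simp only [Matrix.submatrix_apply]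
        cases e a <;> cases e b <;> rfl
      have key : IsUnit (A.submatrix (fun i : Fin (k+1) => Sum.elim (⇑S) (fun _ => i₀) (e i))
          (fun i : Fin (k+1) => Sum.elim (⇑T) (fun _ => j) (e i))) := by
        rw [hsub]
        obtain ⟨ib⟩ := hFB.nonempty_invertible
        letI := ib
        have h1 : (fromBlocks B u v x).submatrix ⇑e ⇑e *
            (⅟(fromBlocks B u v x)).submatrix ⇑e ⇑e = 1 := by
          rw [Matrix.submatrix_mul_equiv _ _ _ e, mul_invOf_self, Matrix.submatrix_one_equiv]
        have h2 : (⅟(fromBlocks B u v x)).submatrix ⇑e ⇑e *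
            (fromBlocks B u v x).submatrix ⇑e ⇑e = 1 := by
          rw [Matrix.submatrix_mul_equiv _ _ _ e, invOf_mul_self, Matrix.submatrix_one_equiv]
        exact ⟨⟨_, _, h1, h2⟩, rfl⟩
      exact hmax ⟨_, hSinj⟩ ⟨_, hTinj⟩ key
  refine ⟨fun i => (∑ p, if S p = i then c p else 0) - (if i = i₀ then 1 else 0), ?_, ?_⟩
  · intro h
    have h0 := congrFun h i₀
    simp only [Pi.zero_apply] at h0
    rw [Finset.sum_eq_zero (fun p _ => by rw [if_neg (hi₀ p)])] at h0
    simp at h0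
  · funext j
    have h1 := hcol j
    rw [Pi.zero_apply, vecMul_apply']
    have expand : ∀ i : m, ((∑ p, if S p = i then c p else 0) - (if i = i₀ then 1 else 0)) * A i j
        = (∑ p, if S p = i then c p * A i j else 0) - (if i = i₀ then A i j else 0) := by
      intro i
      rw [sub_mul, Finset.sum_mul]
      congr 1
      · exact Finset.sum_congr rfl fun p _ => by split <;> simp
      · split <;> simp
    rw [Finset.sum_congr rfl fun i _ => expand i, Finset.sum_sub_distrib, Finset.sum_comm]
    simp only [Finset.sum_ite_eq, Finset.mem_univ, if_true]
    rw [Finset.sum_ite_eq' Finset.univ i₀ (fun i => A i j)]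
    simp [h1]
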